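/- Let S be a profinite semigroup topologically generated by a finite subset A, let T be a finite semigroup, and let φ : S → T be a continuous semigroup homomorphism. Then S equals the subsemigroup generated algebraically (without taking closure) by A together with the set {s ∈ S : φ(s) is idempotent}. -/

import Mathlib

/-- A bundled finite semigroup. -/
structure FinSgp : Type 1 where
  carrier : Type
  [str : Semigroup carrier]
  [fin : Finite carrier]

attribute [instance] FinSgp.str FinSgp.fin

/-- Finite semigroups carry the discrete topology. -/
instance (T : FinSgp) : TopologicalSpace T.carrier := ⊥

instance (T : FinSgp) : DiscreteTopology T.carrier := ⟨rfl⟩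

/-- A pseudovariety of finite semigroups: a class of finite semigroups closed under
homomorphic images, (isomorphic copies of) subsemigroups, and binary direct products. -/
def IsPseudovariety (V : Set FinSgp) : Prop :=
  (∀ S ∈ V, ∀ (T : FinSgp) (f : S.carrier →ₙ* T.carrier), Function.Surjective f → T ∈ V) ∧
  (∀ S ∈ V, ∀ (T : FinSgp) (f : T.carrier →ₙ* S.carrier), Function.Injective f → T ∈ V) ∧
  (∀ S ∈ V, ∀ T ∈ V, (FinSgp.mk (S.carrier × T.carrier)) ∈ V)

/-- A profinite semigroup: a compact, Hausdorff, totally disconnected topological semigroup. -/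
def IsProfiniteSgp (S : Type) [Semigroup S] [TopologicalSpace S] : Prop :=
  ContinuousMul S ∧ CompactSpace S ∧ T2Space S ∧ TotallyDisconnectedSpace S

/-- A pro-V semigroup: a profinite semigroup whose points are separated by continuous
homomorphisms onto finite semigroups belonging to V. -/
def IsProV (V : Set FinSgp) (S : Type) [Semigroup S] [TopologicalSpace S] : Prop :=
  IsProfiniteSgp S ∧ ∀ x y : S, x ≠ y →
    ∃ (T : FinSgp) (f : S →ₙ* T.carrier),
      T ∈ V ∧ Continuous f ∧ Function.Surjective f ∧ f x ≠ f y

/-- `A` topologically generates the topological semigroup `S`. -/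
def TopGen (S : Type) [Semigroup S] [TopologicalSpace S] (A : Set S) : Prop :=
  closure ((Subsemigroup.closure A : Subsemigroup S) : Set S) = Set.univ

/-- A topological semigroup is locally countable if every closed subsemigroup
topologically generated by a finite subset is countable. -/
def IsLocCountable (S : Type) [Semigroup S] [TopologicalSpace S] : Prop :=
  ∀ A : Set S, A.Finite →
    (closure ((Subsemigroup.closure A : Subsemigroup S) : Set S)).Countable

/-- A pseudovariety is locally countable if every pro-V semigroup is locally countable. -/
def PVLocallyCountable (V : Set FinSgp) : Prop :=
  ∀ (S : Type) [Semigroup S] [TopologicalSpace S], IsProV V S → IsLocCountable S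

/-- A pseudovariety is locally finite if every finitely generated pro-V semigroup is finite. -/
def PVLocallyFinite (V : Set FinSgp) : Prop :=
  ∀ (S : Type) [Semigroup S] [TopologicalSpace S], IsProV V S →
    (∃ A : Set S, A.Finite ∧ TopGen S A) → Finite S

/-- The join of two pseudovarieties: the smallest pseudovariety containing both. -/
def PVJoin (V W : Set FinSgp) : Set FinSgp :=
  ⋂₀ {U | IsPseudovariety U ∧ V ⊆ U ∧ W ⊆ U}

/-- The preimage of an idempotent under a semigroup homomorphism, as a subsemigroup. -/
def idemFiber {S T : Type} [Semigroup S] [Semigroup T] (f : S →ₙ* T)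
    (e : T) (he : e * e = e) : Subsemigroup S where
  carrier := f ⁻¹' {e}
  mul_mem' := fun {a b} ha hb => by
    simp only [Set.mem_preimage, Set.mem_singleton_iff] at ha hb ⊢
    rw [map_mul, ha, hb, he]

/-- A subsemigroup of a finite semigroup, as a bundled finite semigroup. -/
def subFinSgp {S : Type} [Semigroup S] [Finite S] (T : Subsemigroup S) : FinSgp :=
  FinSgp.mk T

/-- The generators of the Mal'cev product `V ⓜ W`: finite semigroups `S` admitting a
homomorphism onto some `T ∈ W` whose fibers over idempotents lie in `V`. -/
def MalcevWitness (V W : Set FinSgp) (S : FinSgp) : Prop :=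
  ∃ (T : FinSgp) (f : S.carrier →ₙ* T.carrier), T ∈ W ∧
    ∀ (e : T.carrier) (he : e * e = e), subFinSgp (idemFiber f e he) ∈ V

/-- The Mal'cev product of two pseudovarieties: the smallest pseudovariety containing
all its generators. -/
def Malcev (V W : Set FinSgp) : Set FinSgp :=
  ⋂₀ {U | IsPseudovariety U ∧ ∀ S : FinSgp, MalcevWitness V W S → S ∈ U}

/-- Green's preorder `≤_L`. -/
def lLE {S : Type} [Semigroup S] (u v : S) : Prop := u = v ∨ ∃ x, u = x * v

/-- Green's relation `L`. -/
def GreenL {S : Type} [Semigroup S] (u v : S) : Prop := lLE u v ∧ lLE v u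

/-- Green's preorder `≤_J`. -/
def jLE {S : Type} [Semigroup S] (u v : S) : Prop :=
  u = v ∨ (∃ x, u = v * x) ∨ (∃ x, u = x * v) ∨ (∃ x y, u = x * v * y)

/-- Green's relation `J`. -/
def GreenJ {S : Type} [Semigroup S] (u v : S) : Prop := jLE u v ∧ jLE v u

/-- A regular element of a semigroup. -/
def IsRegularElt {S : Type} [Semigroup S] (s : S) : Prop := ∃ t, s = s * t * s

/-- `S` has only finitely many regular `J`-classes. -/
def FinManyRegJ (S : Type) [Semigroup S] : Prop :=
  ∃ F : Set S, F.Finite ∧ ∀ s : S, IsRegularElt s → ∃ t ∈ F, GreenJ s t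

/-- A subgroup of a semigroup: a subsemigroup which is a group under the induced
multiplication. -/
def IsSgpSubgroup (S : Type) [Semigroup S] (G : Set S) : Prop :=
  (∀ x ∈ G, ∀ y ∈ G, x * y ∈ G) ∧
  ∃ e ∈ G, (∀ x ∈ G, e * x = x ∧ x * e = x) ∧ (∀ x ∈ G, ∃ y ∈ G, x * y = e ∧ y * x = e)

/-- A group element of a semigroup: an element lying in some subgroup. -/
def IsGroupElt (S : Type) [Semigroup S] (s : S) : Prop :=
  ∃ G : Set S, IsSgpSubgroup S G ∧ s ∈ G

/-- `prodFrom f n` is the product `f 0 * f 1 * ⋯ * f n`. -/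
def prodFrom {S : Type} [Semigroup S] (f : ℕ → S) : ℕ → S
  | 0 => f 0
  | n + 1 => prodFrom f n * f (n + 1)

/-- A semigroup is nilpotent if it has a zero element and some length bound beyond
which all products equal zero. -/
def IsNilpotentSgp (S : Type) [Semigroup S] : Prop :=
  ∃ z : S, (∀ x : S, z * x = z ∧ x * z = z) ∧ ∃ n : ℕ, ∀ f : ℕ → S, prodFrom f n = z

/-- The pseudovariety `N` of finite nilpotent semigroups. -/
def NPv : Set FinSgp := {S | IsNilpotentSgp S.carrier}

/-- A semigroup which is a group. -/
def IsGroupSgp (S : Type) [Semigroup S] : Prop :=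
  ∃ e : S, (∀ x : S, e * x = x ∧ x * e = x) ∧ ∀ x : S, ∃ y : S, x * y = e ∧ y * x = e

/-- The pseudovariety `LG` of finite local groups: `eSe` is a group for each idempotent `e`. -/
def LG : Set FinSgp :=
  {S | ∀ e : S.carrier, e * e = e → ∀ s : S.carrier,
      ∃ t : S.carrier, (e * s * e) * (e * t * e) = e ∧ (e * t * e) * (e * s * e) = e}

/-- The pseudovariety `IE` of finite semigroups with exactly one idempotent. -/
def IE : Set FinSgp := {S | ∃! e : S.carrier, e * e = e}

/-- A bundled topological semigroup (carrier, multiplication, topology). -/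
structure TopSgp : Type 1 where
  carrier : Type
  [str : Semigroup carrier]
  [top : TopologicalSpace carrier]

attribute [instance] TopSgp.str TopSgp.top

/-- The fiber of a relational morphism over an idempotent, as a subsemigroup of the
domain. -/
def relFiber {S T : Type} [Semigroup S] [Semigroup T] (μ : Subsemigroup (S × T))
    (e : T) (he : e * e = e) : Subsemigroup S where
  carrier := {s | (s, e) ∈ μ}
  mul_mem' := fun {a b} ha hb => by
    have h := μ.mul_mem ha hb
    simpa [Prod.mk_mul_mk, he] using h

/-- `spow x n = x ^ (n + 1)` in a semigroup. -/
def spow {S : Type} [Semigroup S] (x : S) : ℕ → S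
  | 0 => x
  | n + 1 => spow x n * x

/-- The pseudovariety `A ∩ ESl` of finite aperiodic semigroups with commuting idempotents. -/
def AESl : Set FinSgp :=
  {S | (∃ n : ℕ, ∀ x : S.carrier, spow x (n + 1) = spow x n) ∧
       (∀ e f : S.carrier, e * e = e → f * f = f → e * f = f * e)}


namespace AKProof

variable {M : Type} [Monoid M]

/-- Green's R-preorder (monoid form). -/
def rle (x y : M) : Prop := ∃ u, x = y * u
def lle (x y : M) : Prop := ∃ u, x = u * y
def jle (x y : M) : Prop := ∃ u v, x = u * y * v
def req (x y : M) : Prop := rle x y ∧ rle y x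
def leq (x y : M) : Prop := lle x y ∧ lle y x
def jeq (x y : M) : Prop := jle x y ∧ jle y x

lemma rle_refl (x : M) : rle x x := ⟨1, (mul_one x).symm⟩
lemma lle_refl (x : M) : lle x x := ⟨1, (one_mul x).symm⟩
lemma jle_refl (x : M) : jle x x := ⟨1, 1, by simp⟩

lemma rle_trans {x y z : M} (h1 : rle x y) (h2 : rle y z) : rle x z := by
  obtain ⟨u, rfl⟩ := h1; obtain ⟨v, rfl⟩ := h2; exact ⟨v * u, mul_assoc _ _ _⟩
lemma lle_trans {x y z : M} (h1 : lle x y) (h2 : lle y z) : lle x z := by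
  obtain ⟨u, rfl⟩ := h1; obtain ⟨v, rfl⟩ := h2; exact ⟨u * v, (mul_assoc _ _ _).symm⟩
lemma jle_trans {x y z : M} (h1 : jle x y) (h2 : jle y z) : jle x z := by
  obtain ⟨u, v, rfl⟩ := h1; obtain ⟨a, b, rfl⟩ := h2
  exact ⟨u * a, b * v, by simp only [mul_assoc]⟩

lemma req_refl (x : M) : req x x := ⟨rle_refl x, rle_refl x⟩
lemma leq_refl (x : M) : leq x x := ⟨lle_refl x, lle_refl x⟩
lemma jeq_refl (x : M) : jeq x x := ⟨jle_refl x, jle_refl x⟩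
lemma req_symm {x y : M} (h : req x y) : req y x := ⟨h.2, h.1⟩
lemma leq_symm {x y : M} (h : leq x y) : leq y x := ⟨h.2, h.1⟩
lemma jeq_symm {x y : M} (h : jeq x y) : jeq y x := ⟨h.2, h.1⟩
lemma req_trans {x y z : M} (h1 : req x y) (h2 : req y z) : req x z :=
  ⟨rle_trans h1.1 h2.1, rle_trans h2.2 h1.2⟩
lemma leq_trans {x y z : M} (h1 : leq x y) (h2 : leq y z) : leq x z :=
  ⟨lle_trans h1.1 h2.1, lle_trans h2.2 h1.2⟩
lemma jeq_trans {x y z : M} (h1 : jeq x y) (h2 : jeq y z) : jeq x z :=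
  ⟨jle_trans h1.1 h2.1, jle_trans h2.2 h1.2⟩

lemma rle_jle {x y : M} (h : rle x y) : jle x y := by
  obtain ⟨u, rfl⟩ := h; exact ⟨1, u, by simp⟩
lemma lle_jle {x y : M} (h : lle x y) : jle x y := by
  obtain ⟨u, rfl⟩ := h; exact ⟨u, 1, by simp⟩

def Rset (x : M) : Set M := {z | req z x}
def Lset (x : M) : Set M := {z | leq z x}
def Jset (x : M) : Set M := {z | jeq z x}

lemma Rset_eq_of_req {x y : M} (h : req x y) : Rset x = Rset y := by
  ext z; exact ⟨fun hz => req_trans hz h, fun hz => req_trans hz (req_symm h)⟩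
lemma Lset_eq_of_leq {x y : M} (h : leq x y) : Lset x = Lset y := by
  ext z; exact ⟨fun hz => leq_trans hz h, fun hz => leq_trans hz (leq_symm h)⟩
lemma req_of_Rset_eq {x y : M} (h : Rset x = Rset y) : req x y := by
  have : x ∈ Rset y := h ▸ req_refl x
  exact this
lemma leq_of_Lset_eq {x y : M} (h : Lset x = Lset y) : leq x y := by
  have : x ∈ Lset y := h ▸ leq_refl x
  exact this
lemma jeq_of_Jset_eq {x y : M} (h : Jset x = Jset y) : jeq x y := by
  have : x ∈ Jset y := h ▸ jeq_refl x
  exact this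

/-- Idempotent power. -/
lemma exists_idem_pow [Finite M] (x : M) : ∃ n, 0 < n ∧ x ^ n * x ^ n = x ^ n := by
  obtain ⟨i, j, hne, hij⟩ := Finite.exists_ne_map_eq_of_infinite (fun n : ℕ => x ^ (n+1))
  wlog hlt : i < j generalizing i j
  · exact this j i hne.symm hij.symm (by omega)
  set p := j - i with hp
  have hp1 : 0 < p := by omega
  have key : ∀ m, i + 1 ≤ m → x ^ m = x ^ (m + p) := by
    intro m hm
    obtain ⟨d, rfl⟩ : ∃ d, m = (i+1) + d := ⟨m - (i+1), by omega⟩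
    have h2 : (i+1) + d + p = (j+1) + d := by omega
    calc x ^ (i+1+d) = x ^ (i+1) * x ^ d := by rw [pow_add]
    _ = x ^ (j+1) * x ^ d := by rw [hij]
    _ = x ^ (j+1+d) := by rw [← pow_add]
    _ = x ^ (i+1+d+p) := by rw [h2]
  have key2 : ∀ k m, i + 1 ≤ m → x ^ m = x ^ (m + k * p) := by
    intro k
    induction k with
    | zero => simp
    | succ k ih =>
        intro m hm
        have := key (m + k * p) (by omega)
        rw [ih m hm] at *
        rw [this]
        ring_nf
  refine ⟨(i+1) * p, by positivity, ?_⟩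
  rw [← pow_add]
  exact (key2 (i+1) ((i+1)*p) (Nat.le_mul_of_pos_right _ hp1)).symm

/-- Stability, R-version. -/
lemma stabR [Finite M] {x y : M} (h : jle x (x * y)) : rle x (x * y) := by
  obtain ⟨u, v, hx⟩ := h
  set z := y * v with hz
  have hx' : x = u * x * z := by
    calc x = u * (x * y) * v := hx
    _ = u * x * z := by simp [hz, mul_assoc]
  have key : ∀ n, x = u ^ n * x * z ^ n := by
    intro n
    induction n with
    | zero => simp
    | succ n ih =>
        calc x = u * x * z := hx'
        _ = u * (u ^ n * x * z ^ n) * z := by rw [← ih]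
        _ = u ^ (n+1) * x * z ^ (n+1) := by rw [pow_succ', pow_succ]; simp [mul_assoc]
  obtain ⟨n, hn, hidem⟩ := exists_idem_pow z
  have h1 : x * z ^ n = x := by
    calc x * z ^ n = (u ^ n * x * z ^ n) * z ^ n := by conv_lhs => rw [key n]
    _ = u ^ n * x * (z ^ n * z ^ n) := by simp [mul_assoc]
    _ = u ^ n * x * z ^ n := by rw [hidem]
    _ = x := (key n).symm
  obtain ⟨m, rfl⟩ : ∃ m, n = m + 1 := ⟨n - 1, by omega⟩
  refine ⟨v * z ^ m, ?_⟩
  calc x = x * z ^ (m+1) := h1.symm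
  _ = x * (z * z ^ m) := by rw [pow_succ']
  _ = x * y * (v * z ^ m) := by simp [hz, mul_assoc]

/-- Stability, L-version. -/
lemma stabL [Finite M] {x y : M} (h : jle x (y * x)) : lle x (y * x) := by
  obtain ⟨u, v, hx⟩ := h
  set z := u * y with hz
  have hx' : x = z * x * v := by
    calc x = u * (y * x) * v := hx
    _ = z * x * v := by simp [hz, mul_assoc]
  have key : ∀ n, x = z ^ n * x * v ^ n := by
    intro n
    induction n with
    | zero => simp
    | succ n ih =>
        calc x = z * x * v := hx'
        _ = z * (z ^ n * x * v ^ n) * v := by rw [← ih]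
        _ = z ^ (n+1) * x * v ^ (n+1) := by rw [pow_succ', pow_succ]; simp [mul_assoc]
  obtain ⟨n, hn, hidem⟩ := exists_idem_pow z
  have h1 : z ^ n * x = x := by
    calc z ^ n * x = z ^ n * (z ^ n * x * v ^ n) := by conv_lhs => rw [key n]
    _ = (z ^ n * z ^ n) * x * v ^ n := by simp [mul_assoc]
    _ = z ^ n * x * v ^ n := by rw [hidem]
    _ = x := (key n).symm
  obtain ⟨m, rfl⟩ : ∃ m, n = m + 1 := ⟨n - 1, by omega⟩
  refine ⟨z ^ m * u, ?_⟩
  calc x = z ^ (m+1) * x := h1.symm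
  _ = z ^ m * z * x := by rw [pow_succ]
  _ = (z ^ m * u) * (y * x) := by simp [hz, mul_assoc]

/-- Cancellation from Green relations. -/
lemma cancel {g q q' : M} (h1 : lle q (g * q)) (h2 : rle q' q) (h : g * q = g * q') : q = q' := by
  obtain ⟨u, hu⟩ := h1
  obtain ⟨σ, rfl⟩ := h2
  calc q = u * (g * q) := hu
  _ = u * (g * (q * σ)) := by rw [h]
  _ = (u * (g * q)) * σ := by simp [mul_assoc]
  _ = q * σ := by rw [← hu]


section Lists
variable {α : Type} (val : α → M)

def vp (l : List α) : M := (l.map val).prod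

lemma vp_append (l₁ l₂ : List α) : vp val (l₁ ++ l₂) = vp val l₁ * vp val l₂ := by
  simp [vp]

lemma vp_flatten (bs : List (List α)) : vp val bs.flatten = (bs.map (vp val)).prod := by
  induction bs with
  | nil => simp [vp]
  | cons b bs ih => simp [List.flatten_cons, vp_append, ih]

lemma vp_singleton (a : α) : vp val [a] = val a := by simp [vp]

def Blk (b l : List α) : Prop := b ≠ [] ∧ ∃ p s, l = p ++ b ++ s

lemma blk_trans {b c l : List α} (h1 : Blk b c) (h2 : Blk c l) : Blk b l := by
  obtain ⟨hb, p, s, rfl⟩ := h1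
  obtain ⟨hc, p', s', rfl⟩ := h2
  exact ⟨hb, p' ++ p, s ++ s', by simp⟩

lemma blk_self {l : List α} (h : l ≠ []) : Blk l l := ⟨h, [], [], by simp⟩

lemma blk_take {l : List α} {c : ℕ} (h1 : 0 < c) (h2 : c ≤ l.length) : Blk (l.take c) l := by
  refine ⟨?_, [], l.drop c, by simp⟩
  have : (l.take c).length = c := by
    rw [List.length_take]; omega
  intro hh
  rw [hh] at this
  simp at this
  omega

lemma blk_drop {l : List α} {c : ℕ} (h : c < l.length) : Blk (l.drop c) l := by
  refine ⟨?_, l.take c, [], by simp⟩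
  have : (l.drop c).length = l.length - c := by rw [List.length_drop]
  intro hh
  rw [hh] at this
  simp at this
  omega

/-- slice -/
def sl (a b : ℕ) (l : List α) : List α := (l.take b).drop a

lemma sl_len {l : List α} {a b : ℕ} (h2 : b ≤ l.length) : (sl a b l).length = b - a := by
  simp [sl, List.length_drop, List.length_take]
  omega

lemma sl_ne {l : List α} {a b : ℕ} (h1 : a < b) (h2 : b ≤ l.length) : sl a b l ≠ [] := by
  intro hh
  have := sl_len (l := l) (a := a) (b := b) h2
  rw [hh] at this
  simp at this
  omega

lemma take_eq_append_sl {l : List α} {a b : ℕ} (h : a ≤ b) :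
    l.take b = l.take a ++ sl a b l := by
  have : (l.take b).take a = l.take a := by rw [List.take_take]; congr 1; omega
  conv_lhs => rw [← List.take_append_drop a (l.take b)]
  rw [this]
  rfl

lemma drop_eq_sl_append {l : List α} {a b : ℕ} (h : a ≤ b) (h2 : b ≤ l.length) :
    l.drop a = sl a b l ++ l.drop b := by
  conv_lhs => rw [← List.take_append_drop b l]
  rw [List.drop_append_of_le_length (by rw [List.length_take]; omega)]
  rfl

lemma blk_sl {l : List α} {a b : ℕ} (h1 : a < b) (h2 : b ≤ l.length) : Blk (sl a b l) l := by
  refine ⟨sl_ne h1 h2, l.take a, l.drop b, ?_⟩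
  rw [← take_eq_append_sl (le_of_lt h1), List.take_append_drop]

lemma sl_zero {l : List α} {b : ℕ} : sl 0 b l = l.take b := by simp [sl]

lemma sl_length_eq_drop {l : List α} {a : ℕ} : sl a l.length l = l.drop a := by
  simp [sl]

lemma take_drop_eq_sl {l : List α} {c n : ℕ} : (l.drop c).take n = sl c (c + n) l := by
  rw [sl, List.drop_take]
  congr 1
  omega

lemma sl_append_sl {l : List α} {a b c : ℕ} (h1 : a ≤ b) (h2 : b ≤ c) (h3 : c ≤ l.length) :
    sl a b l ++ sl b c l = sl a c l := by
  have e1 : l.take c = l.take b ++ sl b c l := take_eq_append_sl h2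
  have : sl a c l = (l.take b ++ sl b c l).drop a := by rw [sl, ← e1]
  rw [this, List.drop_append_of_le_length]
  · rfl
  · rw [List.length_take]; omega

def Smooth (l : List α) : Prop :=
  ∀ b b', Blk b l → Blk b' l → jeq (vp val b) (vp val b')

lemma smooth_mono {l l' : List α} (h : ∀ b, Blk b l' → Blk b l) (hs : Smooth val l) :
    Smooth val l' := fun b b' hb hb' => hs b b' (h b hb) (h b' hb')

variable [Finite M]

lemma req_suffix {l : List α} (hs : Smooth val l) {a b : ℕ} (ha : a < l.length)
    (h1 : a < b) (h2 : b ≤ l.length) : req (vp val (sl a b l)) (vp val (l.drop a)) := by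
  rcases eq_or_lt_of_le h2 with rfl | hb
  · rw [sl_length_eq_drop]; exact req_refl _
  · have hd : l.drop a = sl a b l ++ l.drop b := drop_eq_sl_append (le_of_lt h1) h2
    have hv : vp val (l.drop a) = vp val (sl a b l) * vp val (l.drop b) := by
      rw [hd, vp_append]
    constructor
    · rw [hv]
      refine stabR ?_
      rw [← hv]
      have := hs (sl a b l) (l.drop a) (blk_sl h1 h2) (blk_drop ha)
      obtain ⟨u, v, huv⟩ := this.1
      exact ⟨u, v, by rw [← hv] at *; exact huv⟩
    · exact ⟨vp val (l.drop b), hv⟩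

lemma leq_prefix {l : List α} (hs : Smooth val l) {a b : ℕ}
    (h1 : a < b) (h2 : b ≤ l.length) : leq (vp val (sl a b l)) (vp val (l.take b)) := by
  rcases Nat.eq_zero_or_pos a with rfl | ha
  · rw [sl_zero]; exact leq_refl _
  · have hd : l.take b = l.take a ++ sl a b l := take_eq_append_sl (le_of_lt h1)
    have hv : vp val (l.take b) = vp val (l.take a) * vp val (sl a b l) := by
      rw [hd, vp_append]
    constructor
    · rw [hv]
      refine stabL ?_
      rw [← hv]
      have := hs (sl a b l) (l.take b) (blk_sl h1 h2) (blk_take (by omega) h2)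
      obtain ⟨u, v, huv⟩ := this.1
      exact ⟨u, v, by rw [← hv] at *; exact huv⟩
    · exact ⟨vp val (l.take a), hv⟩

/-- color of a cut -/
def ccol (l : List α) (n : ℕ) : Set M × Set M :=
  (Rset (vp val (l.drop n)), Lset (vp val (l.take n)))

def isCut (l : List α) (n : ℕ) : Prop := 0 < n ∧ n < l.length

def colorSet (l : List α) : Set (Set M × Set M) :=
  {c | ∃ n, isCut l n ∧ ccol val l n = c}

lemma ccol_drop {l : List α} (hs : Smooth val l) {c n : ℕ} (hn : 0 < n)
    (hcn : c + n < l.length) : ccol val (l.drop c) n = ccol val l (c + n) := by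
  unfold ccol
  congr 1
  · rw [List.drop_drop]
  · have h := leq_prefix val hs (l := l) (a := c) (b := c + n) (by omega) (by omega)
    show Lset (vp val ((l.drop c).take n)) = _
    rw [take_drop_eq_sl]
    exact Lset_eq_of_leq h

lemma ccol_take {l : List α} (hs : Smooth val l) {b n : ℕ} (hn : 0 < n)
    (hnb : n < b) (hb : b ≤ l.length) : ccol val (l.take b) n = ccol val l n := by
  unfold ccol
  congr 1
  · show Rset (vp val ((l.take b).drop n)) = _
    have : (l.take b).drop n = sl n b l := rfl
    rw [this]
    exact Rset_eq_of_req (req_suffix val hs (by omega) hnb hb)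
  · rw [List.take_take, min_eq_left (le_of_lt hnb)]

end Lists


section Atoms
variable {α : Type} (val : α → M)

def Atoms (bs : List (List α)) : Prop :=
  ∀ b ∈ bs, b ≠ [] ∧ ((∃ a, b = [a]) ∨ vp val b * vp val b = vp val b)

lemma atoms_append {bs₁ bs₂ : List (List α)} (h1 : Atoms val bs₁) (h2 : Atoms val bs₂) :
    Atoms val (bs₁ ++ bs₂) := by
  intro b hb
  rcases List.mem_append.mp hb with h | h
  · exact h1 b h
  · exact h2 b h

lemma atoms_nil : Atoms val ([] : List (List α)) := by intro b hb; simp at hb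

def chiCut (χ : Set M × Set M) (l : List α) (n : ℕ) : Prop :=
  isCut l n ∧ ccol val l n = χ

/-- The SGA inner recursion. -/
lemma lemSGA [Finite M] (χ : Set M × Set M) (K N' : ℕ)
    (IH : ∀ u : List α, Smooth val u → (colorSet val u).ncard ≤ K →
      ∃ bs : List (List α), bs.flatten = u ∧ bs.length ≤ N' ∧ Atoms val bs) :
    ∀ m, ∀ w : List α, Smooth val w →
    (colorSet val w \ {χ}).ncard ≤ K →
    ({x | ∃ n, chiCut val χ w n ∧ x = vp val (w.take n)}.ncard ≤ m) →
    ∃ bs : List (List α), bs.flatten = w ∧ bs.length ≤ m * (N' + 2) + N' ∧ Atoms val bs := by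
  intro m
  induction m with
  | zero =>
      intro w hsm hcol hmeas
      by_cases hex : ∃ n, chiCut val χ w n
      · exfalso
        obtain ⟨n, hn⟩ := hex
        have hne : ({x | ∃ n, chiCut val χ w n ∧ x = vp val (w.take n)}).Nonempty :=
          ⟨vp val (w.take n), n, hn, rfl⟩
        have := (Set.ncard_pos (Set.toFinite _)).mpr hne
        omega
      · have hsub : colorSet val w ⊆ colorSet val w \ {χ} := by
          intro x hx
          refine ⟨hx, ?_⟩
          obtain ⟨n, hcut, hc⟩ := hx
          intro hxx
          simp only [Set.mem_singleton_iff] at hxx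
          exact hex ⟨n, hcut, by rw [hc, hxx]⟩
        obtain ⟨bs, h1, h2, h3⟩ := IH w hsm (le_trans (Set.ncard_le_ncard hsub (Set.toFinite _)) hcol)
        exact ⟨bs, h1, by omega, h3⟩
  | succ m ihm =>
      intro w hsm hcol hmeas
      by_cases hex : ∃ n, chiCut val χ w n
      case neg =>
        have hsub : colorSet val w ⊆ colorSet val w \ {χ} := by
          intro x hx
          refine ⟨hx, ?_⟩
          obtain ⟨n, hcut, hc⟩ := hx
          intro hxx
          simp only [Set.mem_singleton_iff] at hxx
          exact hex ⟨n, hcut, by rw [hc, hxx]⟩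
        obtain ⟨bs, h1, h2, h3⟩ := IH w hsm (le_trans (Set.ncard_le_ncard hsub (Set.toFinite _)) hcol)
        exact ⟨bs, h1, by omega, h3⟩
      case pos =>
      haveI : DecidablePred (chiCut val χ w) := Classical.decPred _
      set c := Nat.find hex with hc
      have hcchi : chiCut val χ w c := Nat.find_spec hex
      have hcmin : ∀ n, n < c → ¬ chiCut val χ w n := fun n hn => Nat.find_min hex hn
      have hc0 : 0 < c := hcchi.1.1
      have hclen : c < w.length := hcchi.1.2
      set P : ℕ → Prop := fun n => chiCut val χ w n ∧ vp val (w.take n) = vp val (w.take c) with hP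
      haveI : DecidablePred P := Classical.decPred _
      set g := vp val (w.take c) with hg
      set cs := Nat.findGreatest P (w.length - 1) with hcs
      have hPc : P c := ⟨hcchi, rfl⟩
      have hccs : c ≤ cs := Nat.le_findGreatest (by omega) hPc
      have hPcs : P cs := Nat.findGreatest_spec (m := c) (by omega) hPc
      have hcsgreat : ∀ n, cs < n → n ≤ w.length - 1 → ¬ P n :=
        fun n h1 h2 => Nat.findGreatest_is_greatest h1 h2
      have hcs0 : 0 < cs := by omega
      have hcslen : cs < w.length := hPcs.1.1.2
      have hgcs : vp val (w.take cs) = g := hPcs.2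
      -- piece₀
      set p0 := w.take c with hp0
      have hsmp0 : Smooth val p0 :=
        smooth_mono val (fun b hb => blk_trans hb (blk_take hc0 (le_of_lt hclen))) hsm
      have hcolp0 : colorSet val p0 ⊆ colorSet val w \ {χ} := by
        rintro x ⟨n, hcut, hcc⟩
        have hn0 : 0 < n := hcut.1
        have hnc : n < c := by
          have h2 := hcut.2
          have : p0.length = c := by rw [hp0, List.length_take]; omega
          omega
        have heq : ccol val p0 n = ccol val w n :=
          ccol_take val hsm hn0 hnc (le_of_lt hclen)
        refine ⟨⟨n, ⟨hn0, by omega⟩, by rw [← heq, hcc]⟩, ?_⟩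
        intro hxx
        simp only [Set.mem_singleton_iff] at hxx
        exact hcmin n hnc ⟨⟨hn0, by omega⟩, by rw [← heq, hcc]; exact hxx⟩
      obtain ⟨bs0, hbs0f, hbs0l, hbs0a⟩ := IH p0 hsmp0
        (le_trans (Set.ncard_le_ncard hcolp0 (Set.toFinite _)) hcol)
      -- middle
      set mid := sl c cs w with hmid
      have hLg2 : Lset (vp val (w.take c)) = χ.2 := congrArg Prod.snd hcchi.2
      have hmidval : c < cs → vp val mid * vp val mid = vp val mid := by
        intro hccs'
        have e1 : w.take cs = w.take c ++ mid := take_eq_append_sl (le_of_lt hccs')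
        have e2 : vp val (w.take cs) = g * vp val mid := by rw [e1, vp_append, ← hg]
        have e3 : g * vp val mid = g := by rw [← e2, hgcs]
        have hLmid : Lset (vp val mid) = Lset (vp val (w.take cs)) :=
          Lset_eq_of_leq (leq_prefix val hsm hccs' (le_of_lt hcslen))
        have hLcs : Lset (vp val (w.take cs)) = χ.2 := congrArg Prod.snd hPcs.1.2
        have hLsets : Lset (vp val mid) = Lset g := by
          rw [hLmid, hLcs, hg, hLg2]
        obtain ⟨a, ha⟩ := (leq_of_Lset_eq hLsets).1
        calc vp val mid * vp val mid = a * (g * vp val mid) := by rw [ha, mul_assoc]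
        _ = a * g := by rw [e3]
        _ = vp val mid := ha.symm
      -- rest
      set rest := w.drop cs with hrest
      have hlenrest : rest.length = w.length - cs := by rw [hrest, List.length_drop]
      have hsmrest : Smooth val rest :=
        smooth_mono val (fun b hb => blk_trans hb (blk_drop hcslen)) hsm
      have hcolrest : colorSet val rest \ {χ} ⊆ colorSet val w \ {χ} := by
        rintro x ⟨⟨n, hcut, hcc⟩, hne⟩
        have hn0 : 0 < n := hcut.1
        have hnlen : n < rest.length := hcut.2
        have heq : ccol val rest n = ccol val w (cs + n) :=
          ccol_drop val hsm hn0 (by omega)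
        exact ⟨⟨cs + n, ⟨by omega, by omega⟩, by rw [← heq, hcc]⟩, hne⟩
      -- measure decrease for rest
      have hmeasrest :
          {x | ∃ n, chiCut val χ rest n ∧ x = vp val (rest.take n)}.ncard ≤ m := by
        set Q := {x | ∃ n, chiCut val χ rest n ∧ x = vp val (rest.take n)} with hQ
        set Pw := {x | ∃ n, chiCut val χ w n ∧ x = vp val (w.take n)} with hPw
        have hfact : ∀ q ∈ Q, ∃ n, 0 < n ∧ cs + n < w.length ∧
            chiCut val χ w (cs + n) ∧ q = vp val (sl cs (cs + n) w) ∧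
            g * q = vp val (w.take (cs + n)) := by
          rintro q ⟨n, ⟨⟨hn0, hnlen⟩, hccχ⟩, rfl⟩
          have h1 : cs + n < w.length := by omega
          have heq : ccol val rest n = ccol val w (cs + n) := ccol_drop val hsm hn0 h1
          refine ⟨n, hn0, h1, ⟨⟨by omega, h1⟩, by rw [← heq]; exact hccχ⟩, ?_, ?_⟩
          · rw [hrest, take_drop_eq_sl]
          · have e1 : w.take (cs + n) = w.take cs ++ rest.take n := by
              rw [hrest, List.take_add]
            rw [e1, vp_append, hgcs]
        have hinj : Set.InjOn (fun x => g * x) Q := by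
          intro q hq q' hq' hgq
          simp only at hgq
          obtain ⟨n, hn0, hlt, hchi, hsl, hgval⟩ := hfact q hq
          obtain ⟨n', hn0', hlt', hchi', hsl', hgval'⟩ := hfact q' hq'
          have hlle : lle q (g * q) := by
            have := leq_prefix val hsm (l := w) (a := cs) (b := cs + n) (by omega) (by omega)
            rw [← hsl, ← hgval] at this
            exact this.1
          have hrq : Rset q = χ.1 := by
            have := req_suffix val hsm (l := w) (a := cs) (b := cs + n)
              (by omega) (by omega) (by omega)
            rw [← hsl] at this
            rw [Rset_eq_of_req this]
            exact congrArg Prod.fst hPcs.1.2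
          have hrq' : Rset q' = χ.1 := by
            have := req_suffix val hsm (l := w) (a := cs) (b := cs + n')
              (by omega) (by omega) (by omega)
            rw [← hsl'] at this
            rw [Rset_eq_of_req this]
            exact congrArg Prod.fst hPcs.1.2
          have hrle : rle q' q := (req_of_Rset_eq (hrq'.trans hrq.symm)).1
          exact (cancel hlle hrle hgq)
        have himg : (fun x => g * x) '' Q ⊆ Pw \ {g} := by
          rintro x ⟨q, hq, rfl⟩
          obtain ⟨n, hn0, hlt, hchi, hsl, hgval⟩ := hfact q hq
          constructor
          · exact ⟨cs + n, hchi, hgval⟩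
          · intro hxx
            simp only [Set.mem_singleton_iff] at hxx
            refine hcsgreat (cs + n) (by omega) (by omega) ⟨hchi, ?_⟩
            rw [← hgval, hxx, hg]
        have hgPw : g ∈ Pw := ⟨c, hcchi, rfl⟩
        have h1 : Q.ncard = ((fun x => g * x) '' Q).ncard :=
          (Set.ncard_image_of_injOn hinj).symm
        have h2 : ((fun x => g * x) '' Q).ncard ≤ (Pw \ {g}).ncard :=
          Set.ncard_le_ncard himg (Set.toFinite _)
        have h3 : (Pw \ {g}).ncard < Pw.ncard :=
          Set.ncard_diff_singleton_lt_of_mem hgPw (Set.toFinite _)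
        omega
      obtain ⟨bs2, hbs2f, hbs2l, hbs2a⟩ := ihm rest hsmrest
        (le_trans (Set.ncard_le_ncard hcolrest (Set.toFinite _)) hcol) hmeasrest
      -- assembly
      have hsplit : w = p0 ++ mid ++ rest := by
        rw [hp0, hmid, hrest, ← take_eq_append_sl hccs, List.take_append_drop]
      rcases eq_or_lt_of_le hccs with heq | hlt
      · have hmidnil : mid = [] := by
          rw [hmid, ← heq]
          have : (sl c c w).length = 0 := by rw [sl_len (by omega)]; omega
          exact List.length_eq_zero_iff.mp this
        refine ⟨bs0 ++ bs2, ?_, ?_, atoms_append val hbs0a hbs2a⟩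
        · rw [List.flatten_append, hbs0f, hbs2f]
          conv_rhs => rw [hsplit, hmidnil]
          simp
        · simp only [List.length_append]
          have hexp : (m+1)*(N'+2) = m*(N'+2) + (N'+2) := by ring
          omega
      · refine ⟨bs0 ++ [mid] ++ bs2, ?_, ?_, ?_⟩
        · rw [List.flatten_append, List.flatten_append, hbs0f, hbs2f]
          conv_rhs => rw [hsplit]
          simp
        · simp only [List.length_append, List.length_singleton]
          have hexp : (m+1)*(N'+2) = m*(N'+2) + (N'+2) := by ring
          omega
        · refine atoms_append val (atoms_append val hbs0a ?_) hbs2a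
          intro b hb
          simp only [List.mem_singleton] at hb
          subst hb
          exact ⟨sl_ne hlt (le_of_lt hcslen), Or.inr (hmidval hlt)⟩

def fS (cM : ℕ) : ℕ → ℕ
  | 0 => 1
  | (k+1) => cM * (fS cM k + 2) + fS cM k + 1

lemma fS_pos (cM k : ℕ) : 1 ≤ fS cM k := by
  cases k with
  | zero => simp [fS]
  | succ k => simp [fS]

lemma colorSet_ncard_le [Finite M] (l : List α) :
    (colorSet val l).ncard ≤ Nat.card M * Nat.card M := by
  have hsub : colorSet val l ⊆
      (fun p : M × M => (Rset p.1, Lset p.2)) '' Set.univ := by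
    rintro x ⟨n, _, hcc⟩
    exact ⟨(vp val (l.drop n), vp val (l.take n)), Set.mem_univ _, by rw [← hcc]; rfl⟩
  calc (colorSet val l).ncard ≤ _ := Set.ncard_le_ncard hsub (Set.toFinite _)
  _ ≤ (Set.univ : Set (M × M)).ncard := Set.ncard_image_le (Set.toFinite _)
  _ = Nat.card (M × M) := Set.ncard_univ _
  _ = Nat.card M * Nat.card M := Nat.card_prod M M

lemma lemS [Finite M] : ∀ (k : ℕ) (u : List α), Smooth val u → (colorSet val u).ncard ≤ k →
    ∃ bs : List (List α), bs.flatten = u ∧ bs.length ≤ fS (Nat.card M) k ∧ Atoms val bs := by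
  have hsmall : ∀ (k : ℕ) (u : List α), u.length ≤ 1 →
      ∃ bs : List (List α), bs.flatten = u ∧ bs.length ≤ fS (Nat.card M) k ∧ Atoms val bs := by
    intro k u hlen
    match u with
    | [] => exact ⟨[], rfl, by simp only [List.length_nil]; exact Nat.zero_le _, atoms_nil val⟩
    | [a] =>
        refine ⟨[[a]], by simp, ?_, ?_⟩
        · simpa using fS_pos (Nat.card M) k
        · intro b hb
          simp only [List.mem_singleton] at hb
          subst hb
          exact ⟨by simp, Or.inl ⟨a, rfl⟩⟩
    | (a :: b :: rest) => simp at hlen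
  intro k
  induction k with
  | zero =>
      intro u hsm hcol
      by_cases hlen : u.length ≤ 1
      · exact hsmall 0 u hlen
      · exfalso
        have hχ : ccol val u 1 ∈ colorSet val u := ⟨1, ⟨one_pos, by omega⟩, rfl⟩
        have := (Set.ncard_pos (Set.toFinite _)).mpr ⟨_, hχ⟩
        omega
  | succ k ihk =>
      intro u hsm hcol
      by_cases hlen : u.length ≤ 1
      · exact hsmall (k+1) u hlen
      push_neg at hlen
      set χ := ccol val u 1 with hχdef
      have hχ : χ ∈ colorSet val u := ⟨1, ⟨one_pos, by omega⟩, rfl⟩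
      set w' := u.drop 1 with hw'
      have hsmw' : Smooth val w' :=
        smooth_mono val (fun b hb => blk_trans hb (blk_drop (by omega))) hsm
      have hcolw' : colorSet val w' \ {χ} ⊆ colorSet val u \ {χ} := by
        rintro x ⟨⟨n, ⟨hn0, hnlen⟩, hcc⟩, hne⟩
        have hlw' : w'.length = u.length - 1 := by rw [hw', List.length_drop]
        have heq : ccol val w' n = ccol val u (1 + n) :=
          ccol_drop val hsm hn0 (by omega)
        exact ⟨⟨1 + n, ⟨by omega, by omega⟩, by rw [← heq, hcc]⟩, hne⟩
      have hcolw'2 : (colorSet val w' \ {χ}).ncard ≤ k := by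
        have h1 : (colorSet val u \ {χ}).ncard < (colorSet val u).ncard :=
          Set.ncard_diff_singleton_lt_of_mem hχ (Set.toFinite _)
        have h2 := Set.ncard_le_ncard hcolw' (Set.toFinite _)
        omega
      have hmeas : {x | ∃ n, chiCut val χ w' n ∧ x = vp val (w'.take n)}.ncard ≤ Nat.card M := by
        have := Set.ncard_le_ncard
          (Set.subset_univ {x | ∃ n, chiCut val χ w' n ∧ x = vp val (w'.take n)})
          (Set.toFinite _)
        rwa [Set.ncard_univ] at this
      obtain ⟨bs', h1, h2, h3⟩ :=
        lemSGA val χ k (fS (Nat.card M) k) (ihk) (Nat.card M) w' hsmw' hcolw'2 hmeas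
      refine ⟨u.take 1 :: bs', ?_, ?_, ?_⟩
      · rw [List.flatten_cons, h1, hw', List.take_append_drop]
      · simp only [List.length_cons]
        rw [show fS (Nat.card M) (k+1)
            = Nat.card M * (fS (Nat.card M) k + 2) + fS (Nat.card M) k + 1 from rfl]
        omega
      · refine atoms_append val (bs₁ := [u.take 1]) ?_ h3
        intro b hb
        simp only [List.mem_singleton] at hb
        subst hb
        match u, hlen with
        | (a :: rest), _ => exact ⟨by simp, Or.inl ⟨a, by simp⟩⟩

end Atoms

section Red
variable {α : Type} (val : α → M)

lemma blk_nil {b : List α} : ¬ Blk b ([] : List α) := by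
  rintro ⟨hb, p, sfx, h⟩
  have := congrArg List.length h
  simp only [List.length_nil, List.length_append] at this
  have : b.length = 0 := by omega
  exact hb (List.length_eq_zero_iff.mp this)

lemma flatten_ne_nil {B : List (List α)} (h : B ≠ []) (h2 : ∀ p ∈ B, p ≠ []) :
    B.flatten ≠ [] := by
  match B with
  | [] => exact absurd rfl h
  | (p :: B') =>
      intro hc
      rw [List.flatten_cons] at hc
      have hp := h2 p (by simp)
      have := congrArg List.length hc
      simp only [List.length_append, List.length_nil] at this
      exact hp (List.length_eq_zero_iff.mp (by omega))

lemma mem_of_blk {b : List α} {B l : List α} (h : Blk B l) : True := trivial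

lemma jle_of_blk {b l : List α} (h : Blk b l) : jle (vp val l) (vp val b) := by
  obtain ⟨hb, p, sfx, rfl⟩ := h
  exact ⟨vp val p, vp val sfx, by rw [vp_append, vp_append]⟩

def hasX (X : Set M) (w : List α) : Prop := ∃ b, Blk b w ∧ Jset (vp val b) = X

lemma hasX_nil {X : Set M} : ¬ hasX val X ([] : List α) := by
  rintro ⟨b, hb, _⟩
  exact blk_nil hb

lemma chop (X : Set M) : ∀ (n : ℕ) (w : List α), w.length ≤ n →
    ∃ (ps : List (List α)) (fin : List α), ps.flatten ++ fin = w ∧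
      (∀ p ∈ ps, p ≠ [] ∧ hasX val X p ∧ ¬ hasX val X p.dropLast) ∧ ¬ hasX val X fin := by
  intro n
  induction n with
  | zero =>
      intro w hw
      have : w = [] := List.length_eq_zero_iff.mp (by omega)
      subst this
      exact ⟨[], [], by simp, by simp, hasX_nil val⟩
  | succ n ih =>
      intro w hw
      by_cases hX : hasX val X w
      case neg => exact ⟨[], w, by simp, by simp, hX⟩
      case pos =>
      have hwne : w ≠ [] := by
        intro hh; subst hh; exact hasX_nil val hX
      have hwlen : 0 < w.length := List.length_pos_iff.mpr hwne
      have key : ∃ c, (0 < c ∧ c ≤ w.length ∧ hasX val X (w.take c)) ∧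
          ∀ d, d < c → ¬ (0 < d ∧ d ≤ w.length ∧ hasX val X (w.take d)) := by
        haveI : DecidablePred (fun c => 0 < c ∧ c ≤ w.length ∧ hasX val X (w.take c)) :=
          Classical.decPred _
        have hexc : ∃ c, 0 < c ∧ c ≤ w.length ∧ hasX val X (w.take c) :=
          ⟨w.length, hwlen, le_refl _, by rw [List.take_length]; exact hX⟩
        exact ⟨Nat.find hexc, Nat.find_spec hexc, fun d hd => Nat.find_min hexc hd⟩
      obtain ⟨c, ⟨hc0, hclen, hcX⟩, hcmin⟩ := key
      set rest := w.drop c with hrest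
      have hrlen : rest.length ≤ n := by
        rw [hrest, List.length_drop]; omega
      obtain ⟨ps', fin, hf, hp, hfin⟩ := ih rest hrlen
      refine ⟨w.take c :: ps', fin, ?_, ?_, hfin⟩
      · rw [List.flatten_cons, List.append_assoc, hf, hrest, List.take_append_drop]
      · intro p hp'
        rcases List.mem_cons.mp hp' with rfl | hmem
        · refine ⟨?_, hcX, ?_⟩
          · intro hh
            have h9 := congrArg List.length hh
            rw [List.length_take] at h9
            simp only [List.length_nil] at h9
            omega
          · have hdl : (w.take c).dropLast = w.take (c - 1) := by
              rw [List.dropLast_eq_take, List.length_take, List.take_take]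
              congr 1
              omega
            rw [hdl]
            rcases Nat.eq_zero_or_pos (c - 1) with h0 | hpos
            · rw [h0]; simpa using hasX_nil val
            · intro hXX
              exact hcmin (c-1) (by omega) ⟨hpos, by omega, hXX⟩
        · exact hp p hmem

def jSetS (w : List α) : Set (Set M) := {c | ∃ b, Blk b w ∧ Jset (vp val b) = c}

lemma jSetS_ncard_le [Finite M] (w : List α) : (jSetS val w).ncard ≤ Nat.card M := by
  have hsub : jSetS val w ⊆ (fun x : M => Jset x) '' Set.univ := by
    rintro x ⟨b, _, hb⟩
    exact ⟨vp val b, Set.mem_univ _, hb⟩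
  calc (jSetS val w).ncard ≤ _ := Set.ncard_le_ncard hsub (Set.toFinite _)
  _ ≤ (Set.univ : Set M).ncard := Set.ncard_image_le (Set.toFinite _)
  _ = Nat.card M := Set.ncard_univ _

lemma compose (K : ℕ) : ∀ (bss : List (List (List α))),
    (∀ B ∈ bss, ∃ fB : List (List α), fB.flatten = B.flatten ∧ fB.length ≤ K ∧ Atoms val fB) →
    ∃ bs : List (List α), bs.flatten = bss.flatten.flatten ∧
      bs.length ≤ bss.length * K ∧ Atoms val bs := by
  intro bss
  induction bss with
  | nil => intro _; exact ⟨[], by simp, by simp, atoms_nil val⟩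
  | cons B bss ih =>
      intro h
      obtain ⟨fB, hf1, hf2, hf3⟩ := h B (by simp)
      obtain ⟨bs, hb1, hb2, hb3⟩ := ih (fun B' hB' => h B' (by simp [hB']))
      refine ⟨fB ++ bs, ?_, ?_, atoms_append val hf3 hb3⟩
      · rw [List.flatten_append, hf1, hb1]
        simp [List.flatten_cons, List.flatten_append]
      · simp only [List.length_append, List.length_cons]
        have : (bss.length + 1) * K = bss.length * K + K := by ring
        omega

def gR (CS : ℕ) : ℕ → ℕ
  | 0 => 0
  | (j+1) => CS * (gR CS j + 1) + gR CS j

lemma lemRed [Finite M] : ∀ (j : ℕ) (w : List α), (jSetS val w).ncard ≤ j →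
    ∃ bs : List (List α), bs.flatten = w ∧
      bs.length ≤ gR (fS (Nat.card M) (Nat.card M * Nat.card M)) j ∧ Atoms val bs := by
  set CS := fS (Nat.card M) (Nat.card M * Nat.card M) with hCS
  intro j
  induction j with
  | zero =>
      intro w hw
      have hwnil : w = [] := by
        by_contra hne
        have : Jset (vp val w) ∈ jSetS val w := ⟨w, blk_self hne, rfl⟩
        have := (Set.ncard_pos (Set.toFinite _)).mpr ⟨_, this⟩
        omega
      subst hwnil
      exact ⟨[], rfl, by simp [gR], atoms_nil val⟩
  | succ j ihj =>
      intro w hw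
      by_cases hwnil : w = []
      · subst hwnil
        exact ⟨[], rfl, by simp only [List.length_nil]; exact Nat.zero_le _, atoms_nil val⟩
      set X := Jset (vp val w) with hX
      have hXw : X ∈ jSetS val w := ⟨w, blk_self hwnil, rfl⟩
      obtain ⟨ps, fin, hflat, hps, hfin⟩ := chop val X w.length w (le_refl _)
      -- every block of `ps` flattens to a block of w which hasX
      have hblkX : ∀ B, Blk B ps → Blk B.flatten w ∧ hasX val X B.flatten := by
        intro B hB
        obtain ⟨hBne, P, S, hPS⟩ := hB
        have hmemB : ∀ p ∈ B, p ≠ [] := by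
          intro p hp
          exact (hps p (by rw [hPS]; simp [hp])).1
        have hBfne : B.flatten ≠ [] := flatten_ne_nil hBne hmemB
        constructor
        · refine ⟨hBfne, P.flatten, S.flatten ++ fin, ?_⟩
          rw [← hflat, hPS]
          simp [List.flatten_append, List.append_assoc]
        · match B, hBne with
          | (p :: B'), _ =>
              have hp := hps p (by rw [hPS]; simp)
              obtain ⟨bX, hbX, hJX⟩ := hp.2.1
              refine ⟨bX, blk_trans hbX ⟨hp.1, [], B'.flatten, by simp [List.flatten_cons]⟩, hJX⟩
      have hsmooth : Smooth (vp val) ps := by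
        intro B B' hB hB'
        have h1 := hblkX B hB
        have h2 := hblkX B' hB'
        have e1 : vp (vp val) B = vp val B.flatten := (vp_flatten val B).symm
        have e2 : vp (vp val) B' = vp val B'.flatten := (vp_flatten val B').symm
        rw [e1, e2]
        have hj1 : jeq (vp val B.flatten) (vp val w) := by
          constructor
          · obtain ⟨bX, hbX, hJX⟩ := h1.2
            exact jle_trans (jle_of_blk val hbX)
              ((jeq_of_Jset_eq (by rw [hJX])).1)
          · exact jle_of_blk val h1.1
        have hj2 : jeq (vp val B'.flatten) (vp val w) := by
          constructor
          · obtain ⟨bX, hbX, hJX⟩ := h2.2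
            exact jle_trans (jle_of_blk val hbX)
              ((jeq_of_Jset_eq (by rw [hJX])).1)
          · exact jle_of_blk val h2.1
        exact jeq_trans hj1 (jeq_symm hj2)
      obtain ⟨bss, hbss1, hbss2, hbss3⟩ :=
        lemS (vp val) (Nat.card M * Nat.card M) ps hsmooth (colorSet_ncard_le (vp val) ps)
      -- convert each part
      have hparts : ∀ B ∈ bss, ∃ fB : List (List α),
          fB.flatten = B.flatten ∧ fB.length ≤ gR CS j + 1 ∧ Atoms val fB := by
        intro B hB
        obtain ⟨hBne, hBalt⟩ := hbss3 B hB
        have hmemps : ∀ p ∈ B, p ∈ ps := by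
          intro p hp
          rw [← hbss1]
          exact List.mem_flatten.mpr ⟨B, hB, hp⟩
        rcases hBalt with ⟨p, rfl⟩ | hidem
        · -- singleton part
          have hp := hps p (hmemps p (by simp))
          obtain ⟨hpne, hpX, hpdl⟩ := hp
          have hmeas : (jSetS val p.dropLast).ncard ≤ j := by
            have hsub : jSetS val p.dropLast ⊆ jSetS val w \ {X} := by
              rintro x ⟨b, hb, rfl⟩
              have hbp : Blk b p := by
                rcases eq_or_ne p.dropLast [] with hdl | hdl
                · rw [hdl] at hb; exact absurd hb blk_nil
                · exact blk_trans hb ⟨hdl, [], [p.getLast hpne], by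
                    simp [List.dropLast_append_getLast hpne]⟩
              have hbw : Blk b w := by
                obtain ⟨s1, t1, hst⟩ := List.append_of_mem (hmemps p (by simp))
                refine blk_trans hbp ⟨hpne, s1.flatten, t1.flatten ++ fin, ?_⟩
                rw [← hflat, hst]
                simp [List.flatten_append, List.flatten_cons, List.append_assoc]
              refine ⟨⟨b, hbw, rfl⟩, ?_⟩
              intro hxx
              simp only [Set.mem_singleton_iff] at hxx
              exact hpdl ⟨b, hb, hxx⟩
            have h1 : (jSetS val w \ {X}).ncard < (jSetS val w).ncard :=
              Set.ncard_diff_singleton_lt_of_mem hXw (Set.toFinite _)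
            have h2 := Set.ncard_le_ncard hsub (Set.toFinite _)
            omega
          obtain ⟨bsp, hbsp1, hbsp2, hbsp3⟩ := ihj p.dropLast hmeas
          refine ⟨bsp ++ [[p.getLast hpne]], ?_, ?_, ?_⟩
          · rw [List.flatten_append, hbsp1]
            simp [List.dropLast_append_getLast hpne]
          · simp only [List.length_append, List.length_singleton]
            omega
          · refine atoms_append val hbsp3 ?_
            intro b hb
            simp only [List.mem_singleton] at hb
            subst hb
            exact ⟨by simp, Or.inl ⟨_, rfl⟩⟩
        · -- idempotent part
          have hmemne : ∀ p ∈ B, p ≠ [] := fun p hp => (hps p (hmemps p hp)).1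
          refine ⟨[B.flatten], by simp, by simp only [List.length_singleton]; omega, ?_⟩
          intro b hb
          simp only [List.mem_singleton] at hb
          subst hb
          refine ⟨flatten_ne_nil hBne hmemne, Or.inr ?_⟩
          have e1 : vp (vp val) B = vp val B.flatten := (vp_flatten val B).symm
          rw [← e1]
          exact hidem
      obtain ⟨bs1, hbs11, hbs12, hbs13⟩ := compose val (gR CS j + 1) bss hparts
      -- fin part
      have hfinmeas : (jSetS val fin).ncard ≤ j := by
        have hsub : jSetS val fin ⊆ jSetS val w \ {X} := by
          rintro x ⟨b, hb, rfl⟩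
          have hbw : Blk b w := by
            rcases eq_or_ne fin [] with hfe | hfe
            · rw [hfe] at hb; exact absurd hb blk_nil
            · exact blk_trans hb ⟨hfe, ps.flatten, [], by rw [← hflat]; simp⟩
          refine ⟨⟨b, hbw, rfl⟩, ?_⟩
          intro hxx
          simp only [Set.mem_singleton_iff] at hxx
          exact hfin ⟨b, hb, hxx⟩
        have h1 : (jSetS val w \ {X}).ncard < (jSetS val w).ncard :=
          Set.ncard_diff_singleton_lt_of_mem hXw (Set.toFinite _)
        have h2 := Set.ncard_le_ncard hsub (Set.toFinite _)
        omega
      obtain ⟨bs2, hbs21, hbs22, hbs23⟩ := ihj fin hfinmeas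
      refine ⟨bs1 ++ bs2, ?_, ?_, atoms_append val hbs13 hbs23⟩
      · rw [List.flatten_append, hbs11, hbs21, hbss1, hflat]
      · simp only [List.length_append]
        have hlen1 : bs1.length ≤ CS * (gR CS j + 1) := by
          calc bs1.length ≤ bss.length * (gR CS j + 1) := hbs12
          _ ≤ CS * (gR CS j + 1) := Nat.mul_le_mul_right _ hbss2
        rw [show gR CS (j+1) = CS * (gR CS j + 1) + gR CS j from rfl]
        omega

/-- The flat factorization theorem. -/
theorem core [Finite M] (w : List α) :
    ∃ bs : List (List α), bs.flatten = w ∧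
      bs.length ≤ gR (fS (Nat.card M) (Nat.card M * Nat.card M)) (Nat.card M) ∧
      Atoms val bs :=
  lemRed val (Nat.card M) w (jSetS_ncard_le val w)

end Red

section Topo
open Pointwise

theorem main
    (S : Type) [Semigroup S] [TopologicalSpace S]
    (hS : ContinuousMul S ∧ CompactSpace S ∧ T2Space S ∧ TotallyDisconnectedSpace S)
    (A : Set S) (hA : A.Finite)
    (hgen : closure ((Subsemigroup.closure A : Subsemigroup S) : Set S) = Set.univ)
    (T : Type) [Semigroup T] [Finite T] [TopologicalSpace T] [DiscreteTopology T]
    (φ : S →ₙ* T) (hφ : Continuous φ) :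
    (Subsemigroup.closure (A ∪ {s : S | φ s * φ s = φ s}) : Set S) = Set.univ := by
  classical
  obtain ⟨hCM, hCS, hT2, _⟩ := hS
  haveI : Finite (WithOne T) := Finite.of_equiv (T ⊕ Unit) (Equiv.optionEquivSumPUnit T).symm
  set I : Set S := {s : S | φ s * φ s = φ s} with hI
  set C : Set S := A ∪ I with hC
  set val : S → WithOne T := fun x => ((φ x : T) : WithOne T) with hval
  set N := gR (fS (Nat.card (WithOne T)) (Nat.card (WithOne T) * Nat.card (WithOne T)))
    (Nat.card (WithOne T)) with hN
  set Pw : ℕ → Set S := fun n => Nat.rec C (fun _ ih => C * ih) n with hPw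
  have hPw0 : Pw 0 = C := rfl
  have hPwS : ∀ n, Pw (n+1) = C * Pw n := fun n => rfl
  -- compactness
  have hIclosed : IsClosed I := by
    have : I = φ ⁻¹' {t : T | t * t = t} := rfl
    rw [this]
    exact (isClosed_discrete _).preimage hφ
  have hCc : IsCompact C := hA.isCompact.union hIclosed.isCompact
  have hPc : ∀ n, IsCompact (Pw n) := by
    intro n
    induction n with
    | zero => exact hCc
    | succ n ih => rw [hPwS]; exact hCc.mul ih
  -- Pw ⊆ the subsemigroup
  have hPU : ∀ n, Pw n ⊆ (Subsemigroup.closure C : Set S) := by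
    intro n
    induction n with
    | zero => exact fun x hx => Subsemigroup.subset_closure hx
    | succ n ih =>
        rw [hPwS]
        rintro z hz
        rw [Set.mem_mul] at hz
        obtain ⟨x, hx, y, hy, rfl⟩ := hz
        exact mul_mem (Subsemigroup.subset_closure hx) (ih hy)
  set DU : Set S := ⋃ n ∈ Finset.range (N+1), Pw n with hDU
  have hDUclosed : IsClosed DU :=
    isClosed_biUnion_finset (fun n _ => (hPc n).isClosed)
  -- coercion product helper
  have helper1 : ∀ b : List S, b ≠ [] →
      ∃ y : S, (b.map (fun x : S => (x : WithOne S))).prod = (y : WithOne S) := by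
    intro b
    induction b with
    | nil => intro h; exact absurd rfl h
    | cons x rest ih =>
        intro _
        match rest, ih with
        | [], _ => exact ⟨x, by simp⟩
        | (z :: rest'), ih =>
            obtain ⟨y, hy⟩ := ih (by simp)
            exact ⟨x * y, by rw [List.map_cons, List.prod_cons, hy, WithOne.coe_mul]⟩
  -- main inclusion
  have key : ((Subsemigroup.closure A : Subsemigroup S) : Set S) ⊆ DU := by
    intro s hs
    have hlist : ∃ l : List S, l ≠ [] ∧ (∀ x ∈ l, x ∈ A) ∧
        (l.map (fun x : S => (x : WithOne S))).prod = (s : WithOne S) := by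
      induction hs using Subsemigroup.closure_induction with
      | mem x hx => exact ⟨[x], by simp, by simp [hx], by simp⟩
      | mul x y hx hy ihx ihy =>
          obtain ⟨lx, hlx1, hlx2, hlx3⟩ := ihx
          obtain ⟨ly, hly1, hly2, hly3⟩ := ihy
          refine ⟨lx ++ ly, by simp [hlx1], ?_, ?_⟩
          · intro z hz
            rcases List.mem_append.mp hz with h | h
            · exact hlx2 z h
            · exact hly2 z h
          · rw [List.map_append, List.prod_append, hlx3, hly3, ← WithOne.coe_mul]
    obtain ⟨l, hlne, hlA, hlprod⟩ := hlist
    obtain ⟨bs, hflat, hlen, hatoms⟩ := core (M := WithOne T) val l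
    -- each block corresponds to an element of C
    have hgood : ∀ b ∈ bs, ∃ y, y ∈ C ∧
        (b.map (fun x : S => (x : WithOne S))).prod = (y : WithOne S) := by
      intro b hb
      obtain ⟨hbne, halt⟩ := hatoms b hb
      obtain ⟨y, hy⟩ := helper1 b hbne
      refine ⟨y, ?_, hy⟩
      rcases halt with ⟨a, rfl⟩ | hid
      · -- singleton : a letter of l, hence in A
        have ha : a ∈ l := by
          rw [← hflat]
          exact List.mem_flatten.mpr ⟨[a], hb, by simp⟩
        have hay : a = y := by
          rw [List.map_singleton, List.prod_singleton] at hy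
          exact_mod_cast hy
        rw [hC]
        exact Or.inl (hay ▸ hlA a ha)
      · -- idempotent block
        have hψ : vp val b = ((φ y : T) : WithOne T) := by
          have h1 : vp val b
              = (WithOne.mapMulHom φ) ((b.map (fun x : S => (x : WithOne S))).prod) := by
            rw [map_list_prod, List.map_map]
            unfold vp
            congr 1
          rw [h1, hy, WithOne.mapMulHom_coe]
        rw [hψ, ← WithOne.coe_mul] at hid
        have : φ y * φ y = φ y := by exact_mod_cast hid
        rw [hC]
        exact Or.inr this
    -- assemble membership in Pw
    have hmain : ∀ (bss : List (List S)), bss ≠ [] →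
        (∀ b ∈ bss, ∃ y, y ∈ C ∧
          (b.map (fun x : S => (x : WithOne S))).prod = (y : WithOne S)) →
        ∀ z : S, ((bss.flatten).map (fun x : S => (x : WithOne S))).prod = (z : WithOne S) →
        z ∈ Pw (bss.length - 1) := by
      intro bss
      induction bss with
      | nil => intro h; exact absurd rfl h
      | cons b bss' ih =>
          intro _ hgood' z hz
          match bss', ih with
          | [], _ =>
              obtain ⟨y, hyC, hyp⟩ := hgood' b (by simp)
              simp only [List.flatten_cons, List.flatten_nil, List.append_nil] at hz
              rw [hyp] at hz
              have : y = z := by exact_mod_cast hz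
              subst this
              exact hyC
          | (b2 :: bss''), ih =>
              obtain ⟨y, hyC, hyp⟩ := hgood' b (by simp)
              have hb2ne : b2 ≠ [] := by
                intro hh
                obtain ⟨y2, hy2C, hy2p⟩ := hgood' b2 (by simp)
                rw [hh] at hy2p
                simp only [List.map_nil, List.prod_nil] at hy2p
                exact WithOne.one_ne_coe hy2p
              have hfne : (b2 :: bss'').flatten ≠ [] := by
                rw [List.flatten_cons]
                intro hh
                rcases List.append_eq_nil_iff.mp hh with ⟨h1, _⟩
                exact hb2ne h1
              obtain ⟨s', hs'⟩ := helper1 _ hfne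
              have hz' : s' ∈ Pw ((b2 :: bss'').length - 1) :=
                ih (by simp) (fun b' hb' => hgood' b' (by simp [hb'])) s' hs'
              have hzz : z = y * s' := by
                rw [List.flatten_cons, List.map_append, List.prod_append, hyp, hs',
                  ← WithOne.coe_mul] at hz
                exact (WithOne.coe_inj.mp hz).symm
              have hlen' : (b :: b2 :: bss'').length - 1 = ((b2 :: bss'').length - 1) + 1 := by
                simp
              rw [hlen', hPwS, hzz]
              exact Set.mul_mem_mul hyC hz'
    have hbsne : bs ≠ [] := by
      intro hh
      rw [hh] at hflat
      exact hlne hflat.symm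
    have hsPw : s ∈ Pw (bs.length - 1) := by
      refine hmain bs hbsne hgood s ?_
      rw [hflat, hlprod]
    have : s ∈ DU := by
      rw [hDU]
      exact Set.mem_biUnion (Finset.mem_range.mpr (by rw [hN]; omega)) hsPw
    exact this
  -- conclude
  have huniv : (Set.univ : Set S) ⊆ DU := by
    rw [← hgen]
    exact closure_minimal key hDUclosed
  apply Set.eq_univ_of_univ_subset
  intro s hsu
  have hsDU := huniv hsu
  rw [hDU] at hsDU
  obtain ⟨n, _, hn⟩ := Set.mem_iUnion₂.mp hsDU
  exact hPU n hn

end Topo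

end AKProof

/-- If `S` is a profinite semigroup topologically generated by a finite
set `A` and `φ : S → T` is a continuous homomorphism into a finite semigroup, then `S` is
algebraically generated by `A` together with the elements mapping to idempotents of `T`. -/
theorem algebraically_generated_of_fiber_idempotents
    (S : Type) [Semigroup S] [TopologicalSpace S] (hS : IsProfiniteSgp S)
    (A : Set S) (hA : A.Finite) (hgen : TopGen S A)
    (T : Type) [Semigroup T] [Finite T] [TopologicalSpace T] [DiscreteTopology T]
    (φ : S →ₙ* T) (hφ : Continuous φ) :
    (Subsemigroup.closure (A ∪ {s : S | φ s * φ s = φ s}) : Set S) = Set.univ := by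
  exact AKProof.main S hS A hA hgen T φ hφ
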